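/- For every real z ≥ 0, z − z·tanh(z)/(1 + sech(z)/2) ≤ 0.4248; that is, the maximum C* := max_{z≥0}( z − z·tanh(z)/(1 + sech(z)/2) ) satisfies C* ≤ 0.4248. -/

import Mathlib

open Real

/-- The numerical bound `C* ≤ 0.4248`: for every real `z ≥ 0`,
`z − z·tanh(z)/(1 + sech(z)/2) ≤ 0.4248`. -/
theorem stmt_14 :
    ∀ z : ℝ, 0 ≤ z → z - z * Real.tanh z / (1 + (Real.cosh z)⁻¹ / 2) ≤ 0.4248 := by
  intro z hz
  set u := Real.exp z with hu
  have hu0 : 0 < u := Real.exp_pos z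
  have hu1 : 1 ≤ u := Real.one_le_exp hz
  -- e * z ≤ u
  have hez : (2.7182818283 : ℝ) * z ≤ u := by
    have h1 : z ≤ Real.exp (z - 1) := by linarith [Real.add_one_le_exp (z - 1)]
    have h2 : Real.exp (z - 1) * Real.exp 1 = u := by
      rw [← Real.exp_add]; ring_nf; exact hu.symm
    have h3 := Real.exp_one_gt_d9
    nlinarith [Real.exp_pos (z - 1)]
  -- key inequality
  have key : z * (u + 2) ≤ 0.4248 * (u ^ 2 + u + 1) := by
    nlinarith [mul_nonneg (by linarith : (0:ℝ) ≤ u - 2.7182818283 * z)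
        (by linarith : (0:ℝ) ≤ u + 2), sq_nonneg (u - 2.7315)]
  -- rewrite goal in terms of u
  have hcosh : Real.cosh z = (u + u⁻¹) / 2 := by
    rw [Real.cosh_eq, Real.exp_neg, hu]
  have heq : z - z * Real.tanh z / (1 + (Real.cosh z)⁻¹ / 2)
      = z * (u + 2) / (u ^ 2 + u + 1) := by
    rw [Real.tanh_eq_sinh_div_cosh, Real.sinh_eq, Real.exp_neg, hcosh, ← hu]
    have h1 : (0:ℝ) < u + u⁻¹ := by positivity
    have h2 : (0:ℝ) < u ^ 2 + u + 1 := by positivity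
    field_simp
    ring
  rw [heq, div_le_iff₀ (by positivity : (0:ℝ) < u ^ 2 + u + 1)]
  linarith [key]
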